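/- Suppose for each g in a finite group G we have an injective additive map f_{g!} : A_g → R into a commutative ring R satisfying the projection formula f_{g!}(a · f_g^*(b)) = f_{g!}(a)·b, where f_g^* : R → A_g is a surjective ring homomorphism and A_g is an R-algebra with unit 1_g. Then the image subring f(⊕_g A_g · g) ⊆ R[G] is generated by the set W = { b·1_G : b ∈ R } ∪ { (f_{g!}1_g)·g : g ∈ G }. -/

import Mathlib

/-- Let `G` be a finite group, `R` a commutative ring, and for
each `g ∈ G` let `A g` be a commutative `R`-algebra (with unit `1_g`) whose
structure map `pull g = f_g^* : R → A g` is a surjective ring homomorphism,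
together with an injective additive map `push g = f_{g!} : A g → R` satisfying
the projection formula `f_{g!}(a · f_g^*(b)) = f_{g!}(a)·b`, and such that
`f_{g!}a · f_{h!}b ∈ image(f_{(gh)!})` (the virtual product), with
`f_{1_G !}` surjective (as `f_{1_G}` is the identity of `Y`).  Then the image
subring `f(⊕_g A_g·g) = { x ∈ R[G] : every coefficient x_g ∈ image(f_{g!}) }`
of the group ring `R[G]` is generated, as a subring, by the set
`W = { b·1_G : b ∈ R } ∪ { (f_{g!}1_g)·g : g ∈ G }`. -/
theorem stmt10 (G : Type*) [Group G] [Fintype G] [DecidableEq G]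
    (R : Type*) [CommRing R]
    (A : G → Type*) [∀ g, CommRing (A g)]
    (pull : ∀ g, R →+* A g)
    (hpull : ∀ g, Function.Surjective (pull g))
    (push : ∀ g, A g →+ R)
    (hinj : ∀ g, Function.Injective (push g))
    (hproj : ∀ (g : G) (a : A g) (b : R), push g (a * pull g b) = push g a * b)
    (hmul : ∀ (g h : G) (a : A g) (b : A h),
      push g a * push h b ∈ Set.range (push (g * h)))
    (hone : Function.Surjective (push (1 : G))) :
    (Subring.closure
        ((Set.range fun b : R => MonoidAlgebra.single (1 : G) b) ∪
          (Set.range fun g : G => MonoidAlgebra.single g (push g 1))) :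
      Set (MonoidAlgebra R G)) =
    { x : MonoidAlgebra R G | ∀ g : G, x.coeff g ∈ Set.range (push g) } := by
  have h0 : ∀ g : G, (0 : R) ∈ Set.range (push g) := fun g => ⟨0, map_zero _⟩
  ext x
  simp only [SetLike.mem_coe, Set.mem_setOf_eq]
  constructor
  · intro hx
    induction hx using Subring.closure_induction with
    | mem y hy =>
      intro g
      rcases hy with ⟨b, rfl⟩ | ⟨h, rfl⟩
      · rw [MonoidAlgebra.coeff_single, Finsupp.single_apply]
        split
        · next h => exact h ▸ hone b
        · exact h0 g
      · rw [MonoidAlgebra.coeff_single, Finsupp.single_apply]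
        split
        · next h => exact h ▸ ⟨1, rfl⟩
        · exact h0 g
    | one =>
      intro g
      rw [MonoidAlgebra.one_def, MonoidAlgebra.coeff_single, Finsupp.single_apply]
      split
      · next h => subst h; exact hone 1
      · exact h0 g
    | zero => exact fun g => h0 g
    | add x y _ _ hx hy =>
      intro g
      rcases hx g with ⟨a, ha⟩
      rcases hy g with ⟨b, hb⟩
      exact ⟨a + b, by rw [map_add, ha, hb]; rfl⟩
    | neg x _ hx =>
      intro g
      rcases hx g with ⟨a, ha⟩
      exact ⟨-a, by rw [map_neg, ha]; rfl⟩
    | mul x y _ _ hx hy =>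
      intro g
      rw [MonoidAlgebra.coeff_mul]
      have key : ∀ h k : G, (if h * k = g then x.coeff h * y.coeff k else 0) ∈
          AddMonoidHom.mrange (push g) := by
        intro h k
        split
        · next e =>
          rcases hx h with ⟨a, ha⟩
          rcases hy k with ⟨b, hb⟩
          rcases e ▸ hmul h k a b with ⟨c, hc⟩
          exact ⟨c, by rw [hc, ha, hb]⟩
        · exact ⟨0, map_zero _⟩
      rcases AddSubmonoid.sum_mem (AddMonoidHom.mrange (push g))
        (fun h (_ : h ∈ x.coeff.support) => AddSubmonoid.sum_mem _
          (fun k (_ : k ∈ y.coeff.support) => key h k)) with ⟨c, hc⟩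
      exact ⟨c, hc⟩
  · intro hx
    have : x = ∑ g ∈ x.coeff.support, MonoidAlgebra.single g (x.coeff g) := by
      conv_lhs => rw [← MonoidAlgebra.sum_coeff_single x]
      rfl
    rw [this]
    refine Subring.sum_mem _ fun g _ => ?_
    rcases hx g with ⟨a, ha⟩
    rcases hpull g a with ⟨b, hb⟩
    have hxg : x.coeff g = push g 1 * b := by
      rw [← ha, ← hproj g 1 b, one_mul, hb]
    have key : MonoidAlgebra.single g (x.coeff g) =
        MonoidAlgebra.single g (push g 1) * MonoidAlgebra.single (1 : G) b := by
      rw [MonoidAlgebra.single_mul_single, mul_one, hxg]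
    rw [key]
    exact Subring.mul_mem _
      (Subring.subset_closure (Or.inr ⟨g, rfl⟩))
      (Subring.subset_closure (Or.inl ⟨b, rfl⟩))
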